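/- Let a : [t₁,∞) × ℝ → ℝ be continuous with continuous spatial derivative ∂ₓa, 1-periodic in the space variable, and bounded. Let w : [t₁,∞) × ℝ → ℝ be continuous together with ∂ₜw, ∂ₓw, ∂ₓₓw, be 1-periodic in the space variable and satisfy ∂ₜw − ∂ₓₓw + ∂ₓ(a·w) = 0 on (t₁,∞) × ℝ. Then the function t ↦ ∫₀¹ |w(t,x)| dx is non-increasing on [t₁,∞). (L¹ contraction for the conservation-form linear convection–diffusion equation with periodic boundary conditions.) -/

import Mathlib

open Set Real

/-- Spatial partial derivative ∂ₓw(t,x). -/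
noncomputable def partialX (w : ℝ → ℝ → ℝ) (t x : ℝ) : ℝ := deriv (w t) x

/-- Temporal partial derivative ∂ₜw(t,x). -/
noncomputable def partialT (w : ℝ → ℝ → ℝ) (t x : ℝ) : ℝ := deriv (fun s => w s x) t

/-- Second spatial partial derivative ∂ₓₓw(t,x). -/
noncomputable def partialXX (w : ℝ → ℝ → ℝ) : ℝ → ℝ → ℝ := partialX (partialX w)

-- Helper lemmas for the approximation φ_ε(s) = √(s²+ε²) of |s|

noncomputable def phi (ε s : ℝ) : ℝ := Real.sqrt (s^2 + ε^2)
noncomputable def phiD (ε s : ℝ) : ℝ := s / Real.sqrt (s^2 + ε^2)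
noncomputable def phiDD (ε s : ℝ) : ℝ := ε^2 / ((s^2 + ε^2) * Real.sqrt (s^2 + ε^2))

lemma sq_add_pos {ε : ℝ} (hε : 0 < ε) (s : ℝ) : 0 < s^2 + ε^2 := by positivity

lemma sqrt_pos' {ε : ℝ} (hε : 0 < ε) (s : ℝ) : 0 < Real.sqrt (s^2 + ε^2) :=
  Real.sqrt_pos.2 (sq_add_pos hε s)

lemma hasDerivAt_phi {ε : ℝ} (hε : 0 < ε) (s : ℝ) : HasDerivAt (phi ε) (phiD ε s) s := by
  have h1 : HasDerivAt (fun s : ℝ => s^2 + ε^2) (2*s) s := by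
    simpa using ((hasDerivAt_pow 2 s).add_const (ε^2))
  have h2 := (Real.hasDerivAt_sqrt (sq_add_pos hε s).ne').comp s h1
  refine HasDerivAt.congr_deriv (f := phi ε) h2 ?_
  unfold phiD
  field_simp

lemma hasDerivAt_phiD {ε : ℝ} (hε : 0 < ε) (s : ℝ) : HasDerivAt (phiD ε) (phiDD ε s) s := by
  have h2 : HasDerivAt (fun s : ℝ => Real.sqrt (s^2 + ε^2)) (phiD ε s) s := hasDerivAt_phi hε s
  have h3 := (hasDerivAt_id s).div h2 (sqrt_pos' hε s).ne'
  refine HasDerivAt.congr_deriv (f := phiD ε) h3 ?_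
  unfold phiDD phiD
  have hs : Real.sqrt (s^2+ε^2) ^ 2 = s^2 + ε^2 := Real.sq_sqrt (sq_add_pos hε s).le
  simp only [id]
  field_simp
  nlinarith [hs, sqrt_pos' hε s]

lemma abs_phiD_le {ε : ℝ} (hε : 0 < ε) (s : ℝ) : |phiD ε s| ≤ 1 := by
  unfold phiD
  rw [abs_div, abs_of_pos (sqrt_pos' hε s)]
  rw [div_le_one (sqrt_pos' hε s)]
  have : |s| = Real.sqrt (s^2) := by rw [Real.sqrt_sq_eq_abs]
  rw [this]
  exact Real.sqrt_le_sqrt (by nlinarith)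

lemma phiDD_nonneg {ε : ℝ} (hε : 0 < ε) (s : ℝ) : 0 ≤ phiDD ε s := by
  unfold phiDD; positivity

lemma phiDD_mul_sq_le {ε : ℝ} (hε : 0 < ε) (s : ℝ) : phiDD ε s * s^2 ≤ ε := by
  unfold phiDD
  rw [div_mul_eq_mul_div, div_le_iff₀ (by positivity)]
  have h1 : ε ≤ Real.sqrt (s^2 + ε^2) := (Real.le_sqrt hε.le (by positivity)).2 (by nlinarith)
  have h3 : ε*ε ≤ ε*Real.sqrt (s^2+ε^2) := mul_le_mul_of_nonneg_left h1 hε.le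
  calc ε^2 * s^2 ≤ (ε * Real.sqrt (s^2+ε^2)) * (s^2 + ε^2) := by
        nlinarith [sqrt_pos' hε s, sq_nonneg s, mul_nonneg (sub_nonneg.2 h3) (sq_nonneg s),
          mul_nonneg (mul_nonneg hε.le (sqrt_pos' hε s).le) (sq_nonneg ε)]
    _ = ε * ((s^2+ε^2) * Real.sqrt (s^2+ε^2)) := by ring

lemma abs_le_phi {ε : ℝ} (hε : 0 < ε) (s : ℝ) : |s| ≤ phi ε s := by
  unfold phi
  rw [show |s| = Real.sqrt (s^2) by rw [Real.sqrt_sq_eq_abs]]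
  exact Real.sqrt_le_sqrt (by nlinarith)

lemma phi_le_abs_add {ε : ℝ} (hε : 0 < ε) (s : ℝ) : phi ε s ≤ |s| + ε := by
  unfold phi
  rw [show |s| + ε = Real.sqrt ((|s| + ε)^2) by rw [Real.sqrt_sq (by positivity)]]
  refine Real.sqrt_le_sqrt ?_
  have := abs_nonneg s
  nlinarith [sq_abs s]

lemma continuous_phi {ε : ℝ} : Continuous (phi ε) := by
  unfold phi; fun_prop

lemma continuous_phiD {ε : ℝ} (hε : 0 < ε) : Continuous (phiD ε) := by
  unfold phiD
  exact continuous_id.div (by fun_prop) (fun s => (sqrt_pos' hε s).ne')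

lemma continuous_phiDD {ε : ℝ} (hε : 0 < ε) : Continuous (phiDD ε) := by
  unfold phiDD
  exact continuous_const.div (by fun_prop)
    (fun s => (mul_pos (sq_add_pos hε s) (sqrt_pos' hε s)).ne')

lemma key_ineq {ε K v d A : ℝ} (hε : 0 < ε) (hA : |A| ≤ K) :
    phiDD ε v * (A * v * d - d^2) ≤ ε * K^2 / 4 := by
  have h1 := phiDD_nonneg hε v
  have h2 := phiDD_mul_sq_le hε v
  have hA2 : A^2 ≤ K^2 := sq_le_sq' (abs_le.1 hA).1 (abs_le.1 hA).2
  nlinarith [mul_nonneg h1 (sq_nonneg (d - A*v/2)),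
    mul_le_mul_of_nonneg_left h2 (sq_nonneg A),
    mul_le_mul_of_nonneg_right hA2 hε.le]


/-- `L¹` contraction for the conservation-form linear convection–diffusion equation
`∂ₜw − ∂ₓₓw + ∂ₓ(a w) = 0` with periodic boundary conditions: the `L¹` norm over one
period is a non-increasing function of time. -/
theorem periodic_convection_diffusion_L1_contraction
    (t₁ : ℝ) (a w : ℝ → ℝ → ℝ)
    (hac : ContinuousOn (Function.uncurry a) (Ici t₁ ×ˢ univ))
    (hax : ∀ t ∈ Ici t₁, ∀ x : ℝ, DifferentiableAt ℝ (a t) x)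
    (haxc : ContinuousOn (fun p : ℝ × ℝ => partialX a p.1 p.2) (Ici t₁ ×ˢ univ))
    (haper : ∀ t x : ℝ, a t (x + 1) = a t x)
    (habd : ∃ K : ℝ, ∀ t ∈ Ici t₁, ∀ x : ℝ, |a t x| ≤ K)
    (hwc : ContinuousOn (Function.uncurry w) (Ici t₁ ×ˢ univ))
    (hwt : ∀ t ∈ Ici t₁, ∀ x : ℝ, DifferentiableAt ℝ (fun s => w s x) t)
    (hwx : ∀ t ∈ Ici t₁, ∀ x : ℝ, DifferentiableAt ℝ (w t) x)
    (hwxx : ∀ t ∈ Ici t₁, ∀ x : ℝ, DifferentiableAt ℝ (partialX w t) x)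
    (hwtc : ContinuousOn (fun p : ℝ × ℝ => partialT w p.1 p.2) (Ici t₁ ×ˢ univ))
    (hwxc : ContinuousOn (fun p : ℝ × ℝ => partialX w p.1 p.2) (Ici t₁ ×ˢ univ))
    (hwxxc : ContinuousOn (fun p : ℝ × ℝ => partialXX w p.1 p.2) (Ici t₁ ×ˢ univ))
    (hwper : ∀ t x : ℝ, w t (x + 1) = w t x)
    (hweq : ∀ t : ℝ, t₁ < t → ∀ x : ℝ,
      partialT w t x - partialXX w t x + deriv (fun y => a t y * w t y) x = 0) :
    AntitoneOn (fun t => ∫ x in (0:ℝ)..1, |w t x|) (Ici t₁) := by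
  obtain ⟨K, hK⟩ := habd
  have hK0 : 0 ≤ K := le_trans (abs_nonneg _) (hK t₁ self_mem_Ici 0)
  -- slices of jointly continuous functions are continuous
  have slice : ∀ {f : ℝ × ℝ → ℝ}, ContinuousOn f (Ici t₁ ×ˢ univ) →
      ∀ t ∈ Ici t₁, Continuous fun x => f (t, x) := by
    intro f hf t ht
    rw [← continuousOn_univ]
    exact hf.comp (Continuous.continuousOn (by continuity)) (fun x _ => ⟨ht, trivial⟩)
  have hwcont : ∀ t ∈ Ici t₁, Continuous (w t) := fun t ht => slice hwc t ht
  have hwxcont : ∀ t ∈ Ici t₁, Continuous (partialX w t) := fun t ht => slice hwxc t ht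
  have hwxxcont : ∀ t ∈ Ici t₁, Continuous (partialXX w t) := fun t ht => slice hwxxc t ht
  have hacont : ∀ t ∈ Ici t₁, Continuous (a t) := fun t ht => slice hac t ht
  have haxcont : ∀ t ∈ Ici t₁, Continuous (partialX a t) := fun t ht => slice haxc t ht
  have main : ∀ ε : ℝ, 0 < ε → ∀ t : ℝ, t₁ < t →
      HasDerivAt (fun t => ∫ x in (0:ℝ)..1, phi ε (w t x))
        (∫ x in (0:ℝ)..1, phiD ε (w t x) * partialT w t x) t := by
    intro ε hε t htlt
    have ht : t ∈ Ici t₁ := le_of_lt htlt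
    obtain ⟨δ, hδ, hδsub⟩ : ∃ δ : ℝ, 0 < δ ∧ t₁ ≤ t - δ :=
      ⟨(t - t₁)/2, by linarith, by linarith⟩
    have hsub : Icc (t-δ) (t+δ) ×ˢ Icc (0:ℝ) 1 ⊆ Ici t₁ ×ˢ univ := by
      rintro ⟨u, x⟩ ⟨hu, -⟩
      exact ⟨le_trans hδsub hu.1, trivial⟩
    obtain ⟨M, hM⟩ := (isCompact_Icc.prod isCompact_Icc).exists_bound_of_continuousOn
      (hwtc.mono hsub)
    have hball : ∀ u ∈ Metric.ball t δ, u ∈ Icc (t-δ) (t+δ) := by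
      intro u hu
      have := abs_lt.1 (Real.dist_eq u t ▸ Metric.mem_ball.1 hu)
      exact ⟨by linarith [this.1], by linarith [this.2]⟩
    have hballIci : ∀ u ∈ Metric.ball t δ, u ∈ Ici t₁ := fun u hu =>
      le_trans hδsub (hball u hu).1
    have key := intervalIntegral.hasDerivAt_integral_of_dominated_loc_of_deriv_le
      (F := fun s x => phi ε (w s x)) (F' := fun s x => phiD ε (w s x) * partialT w s x)
      (x₀ := t) (a := (0:ℝ)) (b := 1) (bound := fun _ => M)
      (μ := MeasureTheory.volume) (Metric.ball_mem_nhds t hδ) ?_ ?_ ?_ ?_ ?_ ?_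
    · exact key.2
    · filter_upwards [Metric.ball_mem_nhds t hδ] with u hu
      exact ((continuous_phi.comp (hwcont u (hballIci u hu))).aestronglyMeasurable).restrict
    · exact ((continuous_phi.comp (hwcont t ht)).intervalIntegrable 0 1)
    · exact ((((continuous_phiD hε).comp (hwcont t ht)).mul
        (slice hwtc t ht)).aestronglyMeasurable).restrict
    · filter_upwards with x
      intro hx u hu
      have hmem : (u, x) ∈ Icc (t-δ) (t+δ) ×ˢ Icc (0:ℝ) 1 := by
        refine ⟨hball u hu, ?_⟩
        have : x ∈ Ioc (0:ℝ) 1 := by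
          simpa [uIoc_of_le (by norm_num : (0:ℝ) ≤ 1)] using hx
        exact ⟨this.1.le, this.2⟩
      have h1 := hM (u, x) hmem
      have h2 := abs_phiD_le hε (w u x)
      rw [Real.norm_eq_abs] at h1 ⊢
      rw [abs_mul]
      calc |phiD ε (w u x)| * |partialT w u x| ≤ 1 * M := by
            apply mul_le_mul h2 h1 (abs_nonneg _)
            norm_num
        _ = M := one_mul M
    · exact intervalIntegrable_const
    · filter_upwards with x
      intro hx u hu
      have hc := (hasDerivAt_phi hε (w u x)).comp u ((hwt u (hballIci u hu) x).hasDerivAt)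
      exact hc
  have bound : ∀ ε : ℝ, 0 < ε → ∀ t : ℝ, t₁ < t →
      (∫ x in (0:ℝ)..1, phiD ε (w t x) * partialT w t x) ≤ ε*K^2/4 := by
    intro ε hε t htlt
    have ht : t ∈ Ici t₁ := le_of_lt htlt
    -- abbreviations
    have h1 : ∀ x, HasDerivAt (w t) (partialX w t x) x := fun x => (hwx t ht x).hasDerivAt
    have h2 : ∀ x, HasDerivAt (partialX w t) (partialXX w t x) x :=
      fun x => (hwxx t ht x).hasDerivAt
    have hA : ∀ x, HasDerivAt (a t) (partialX a t x) x := fun x => (hax t ht x).hasDerivAt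
    have hu : ∀ x, HasDerivAt (fun y => phiD ε (w t y)) (phiDD ε (w t x) * partialX w t x) x :=
      fun x => (hasDerivAt_phiD hε (w t x)).comp x (h1 x)
    have hP : ∀ x, HasDerivAt (fun y => a t y * w t y)
        (partialX a t x * w t x + a t x * partialX w t x) x :=
      fun x => (hA x).mul (h1 x)
    -- PDE pointwise
    have hPT : ∀ x, partialT w t x
        = partialXX w t x - (partialX a t x * w t x + a t x * partialX w t x) := by
      intro x
      have h := hweq t htlt x
      rw [(hP x).deriv] at h
      linarith
    -- periodicity of boundary values
    have hW10 : w t 1 = w t 0 := by simpa using hwper t 0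
    have hA10 : a t 1 = a t 0 := by simpa using haper t 0
    have hWx10 : partialX w t 1 = partialX w t 0 := by
      have hfun : (fun x => w t (x + 1)) = w t := funext (hwper t)
      have := deriv_comp_add_const (f := w t) (a := (1:ℝ)) (x := (0:ℝ))
      rw [hfun] at this
      simp only [zero_add] at this
      exact (this.symm : _)
    -- continuity facts
    have cW := hwcont t ht
    have cWx := hwxcont t ht
    have cWxx := hwxxcont t ht
    have cA := hacont t ht
    have cAx := haxcont t ht
    have cphiDW : Continuous (fun x => phiD ε (w t x)) := (continuous_phiD hε).comp cW
    have cphiDDW : Continuous (fun x => phiDD ε (w t x)) := (continuous_phiDD hε).comp cW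
    -- integration by parts, diffusion term
    have IBP1 : (∫ x in (0:ℝ)..1, phiD ε (w t x) * partialXX w t x)
        = phiD ε (w t 1) * partialX w t 1 - phiD ε (w t 0) * partialX w t 0
          - ∫ x in (0:ℝ)..1, (phiDD ε (w t x) * partialX w t x) * partialX w t x := by
      apply intervalIntegral.integral_mul_deriv_eq_deriv_mul
        (fun x _ => hu x) (fun x _ => h2 x)
      · exact (cphiDDW.mul cWx).intervalIntegrable 0 1
      · exact cWxx.intervalIntegrable 0 1
    -- integration by parts, convection term
    have IBP2 : (∫ x in (0:ℝ)..1, phiD ε (w t x)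
          * (partialX a t x * w t x + a t x * partialX w t x))
        = phiD ε (w t 1) * (a t 1 * w t 1) - phiD ε (w t 0) * (a t 0 * w t 0)
          - ∫ x in (0:ℝ)..1, (phiDD ε (w t x) * partialX w t x) * (a t x * w t x) := by
      apply intervalIntegral.integral_mul_deriv_eq_deriv_mul
        (fun x _ => hu x) (fun x _ => hP x)
      · exact (cphiDDW.mul cWx).intervalIntegrable 0 1
      · exact ((cAx.mul cW).add (cA.mul cWx)).intervalIntegrable 0 1
    -- rewrite integrand using the PDE
    have hsplit : (∫ x in (0:ℝ)..1, phiD ε (w t x) * partialT w t x)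
        = (∫ x in (0:ℝ)..1, phiD ε (w t x) * partialXX w t x)
          - ∫ x in (0:ℝ)..1, phiD ε (w t x)
              * (partialX a t x * w t x + a t x * partialX w t x) := by
      rw [← intervalIntegral.integral_sub (f := fun x => phiD ε (w t x) * partialXX w t x)
        (g := fun x => phiD ε (w t x) * (partialX a t x * w t x + a t x * partialX w t x))
        ((cphiDW.mul cWxx).intervalIntegrable 0 1)
        ((cphiDW.mul ((cAx.mul cW).add (cA.mul cWx))).intervalIntegrable 0 1)]
      apply intervalIntegral.integral_congr
      intro x _
      dsimp only
      rw [hPT x]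
      ring
    have hcombine : (∫ x in (0:ℝ)..1, phiD ε (w t x) * partialT w t x)
        = ∫ x in (0:ℝ)..1, phiDD ε (w t x)
            * (a t x * w t x * partialX w t x - (partialX w t x)^2) := by
      have hiB : (∫ x in (0:ℝ)..1, (phiDD ε (w t x) * partialX w t x) * (a t x * w t x))
          - (∫ x in (0:ℝ)..1, (phiDD ε (w t x) * partialX w t x) * partialX w t x)
          = ∫ x in (0:ℝ)..1, phiDD ε (w t x)
            * (a t x * w t x * partialX w t x - (partialX w t x)^2) := by
        rw [← intervalIntegral.integral_sub
          (f := fun x => (phiDD ε (w t x) * partialX w t x) * (a t x * w t x))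
          (g := fun x => (phiDD ε (w t x) * partialX w t x) * partialX w t x)
          (((cphiDDW.mul cWx).mul (cA.mul cW)).intervalIntegrable 0 1)
          (((cphiDDW.mul cWx).mul cWx).intervalIntegrable 0 1)]
        apply intervalIntegral.integral_congr
        intro x _
        dsimp only
        ring
      rw [hsplit, IBP1, IBP2, hW10, hA10, hWx10]
      linarith [hiB]
    rw [hcombine]
    have hle : (∫ x in (0:ℝ)..1, phiDD ε (w t x)
          * (a t x * w t x * partialX w t x - (partialX w t x)^2))
        ≤ ∫ x in (0:ℝ)..1, (ε*K^2/4 : ℝ) := by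
      apply intervalIntegral.integral_mono_on (by norm_num)
      · exact (cphiDDW.mul ((cA.mul cW).mul cWx |>.sub (cWx.pow 2))).intervalIntegrable 0 1
      · exact intervalIntegrable_const
      · intro x _
        exact key_ineq hε (hK t ht x)
    calc _ ≤ ∫ x in (0:ℝ)..1, (ε*K^2/4 : ℝ) := hle
      _ = ε*K^2/4 := by simp
  have cont : ∀ ε : ℝ, 0 < ε →
      ContinuousOn (fun t => ∫ x in (0:ℝ)..1, phi ε (w t x)) (Ici t₁) := by
    intro ε hε
    have hmax : Continuous (fun p : ℝ × ℝ => (max p.1 t₁, p.2)) := by continuity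
    have hWc : Continuous (Function.uncurry (fun s x : ℝ => w (max s t₁) x)) := by
      rw [← continuousOn_univ]
      exact hwc.comp hmax.continuousOn (fun p _ => ⟨show t₁ ≤ max p.1 t₁ from le_max_right _ _, trivial⟩)
    have hG : Continuous (fun t => ∫ x in Icc (0:ℝ) 1, phi ε (w (max t t₁) x)) := by
      apply continuous_parametric_integral_of_continuous
        (f := fun t x : ℝ => phi ε (w (max t t₁) x))
      · exact continuous_phi.comp hWc
      · exact isCompact_Icc
    apply hG.continuousOn.congr
    intro u hu
    dsimp only
    rw [max_eq_left hu]
    rw [intervalIntegral.integral_of_le (by norm_num : (0:ℝ) ≤ 1),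
      ← MeasureTheory.integral_Icc_eq_integral_Ioc]
  have mono : ∀ ε : ℝ, 0 < ε → ∀ s ∈ Ici t₁, ∀ t ∈ Ici t₁, s ≤ t →
      (∫ x in (0:ℝ)..1, phi ε (w t x)) ≤ (∫ x in (0:ℝ)..1, phi ε (w s x)) + ε*K^2/4*(t-s) := by
    intro ε hε s hs t ht hst
    have hanti : AntitoneOn (fun t => (∫ x in (0:ℝ)..1, phi ε (w t x)) - ε*K^2/4*t) (Ici t₁) := by
      apply antitoneOn_of_deriv_nonpos (convex_Ici t₁)
      · exact (cont ε hε).sub (continuousOn_const.mul continuousOn_id)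
      · intro x hx
        rw [interior_Ici] at hx
        have hlin : HasDerivAt (fun u : ℝ => ε*K^2/4*u) (ε*K^2/4) x := by
          simpa using (hasDerivAt_id x).const_mul (ε*K^2/4)
        exact ((main ε hε x hx).sub hlin).differentiableAt.differentiableWithinAt
      · intro x hx
        rw [interior_Ici] at hx
        have hlin : HasDerivAt (fun u : ℝ => ε*K^2/4*u) (ε*K^2/4) x := by
          simpa using (hasDerivAt_id x).const_mul (ε*K^2/4)
        have h : HasDerivAt (fun t => (∫ x in (0:ℝ)..1, phi ε (w t x)) - ε*K^2/4*t) _ x :=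
          (main ε hε x hx).sub hlin
        rw [h.deriv]
        linarith [bound ε hε x hx]
    have h := hanti hs ht hst
    dsimp only at h
    linarith
  intro s hs t ht hst
  simp only
  have hint1 : ∀ u ∈ Ici t₁, IntervalIntegrable (fun x => |w u x|) MeasureTheory.volume 0 1 :=
    fun u hu => ((hwcont u hu).abs).intervalIntegrable 0 1
  have hint2 : ∀ u ∈ Ici t₁, ∀ ε : ℝ, IntervalIntegrable (fun x => phi ε (w u x)) MeasureTheory.volume 0 1 :=
    fun u hu ε => (continuous_phi.comp (hwcont u hu)).intervalIntegrable 0 1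
  refine le_of_forall_pos_le_add ?_
  intro δ hδ
  have hC0 : 0 < 1 + K^2/4*(t-s) := by
    have : 0 ≤ K^2/4*(t-s) := mul_nonneg (by positivity) (sub_nonneg.2 hst)
    linarith
  obtain ⟨C, hC, hC0⟩ : ∃ C : ℝ, C = 1 + K^2/4*(t-s) ∧ 0 < C := ⟨_, rfl, hC0⟩
  obtain ⟨ε, hε', hε⟩ : ∃ e : ℝ, e = δ / C ∧ 0 < e := ⟨_, rfl, div_pos hδ hC0⟩
  have h1 : (∫ x in (0:ℝ)..1, |w t x|) ≤ ∫ x in (0:ℝ)..1, phi ε (w t x) := by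
    apply intervalIntegral.integral_mono_on (by norm_num) (hint1 t ht) (hint2 t ht ε)
    intro x _
    exact abs_le_phi hε _
  have h2 : (∫ x in (0:ℝ)..1, phi ε (w s x)) ≤ (∫ x in (0:ℝ)..1, |w s x|) + ε := by
    have : (∫ x in (0:ℝ)..1, phi ε (w s x)) ≤ ∫ x in (0:ℝ)..1, (|w s x| + ε) := by
      apply intervalIntegral.integral_mono_on (by norm_num) (hint2 s hs ε)
        ((hint1 s hs).add (intervalIntegrable_const))
      intro x _
      exact phi_le_abs_add hε _
    rw [intervalIntegral.integral_add (hint1 s hs) intervalIntegrable_const,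
      intervalIntegral.integral_const] at this
    norm_num at this
    exact this
  have h3 := mono ε hε s hs t ht hst
  have hεC : ε * C = δ := by rw [hε']; field_simp
  calc (∫ x in (0:ℝ)..1, |w t x|) ≤ (∫ x in (0:ℝ)..1, |w s x|) + ε + ε*K^2/4*(t-s) := by linarith
    _ = (∫ x in (0:ℝ)..1, |w s x|) + ε * C := by rw [hC]; ring
    _ = (∫ x in (0:ℝ)..1, |w s x|) + δ := by rw [hεC]
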